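/- Let a < b be real numbers, let p_1 < p_2 < ⋯ < p_n be points of the open interval (a, b), and let φ be a real function defined and real-analytic on [a, b] ∖ {p_1, …, p_n}, not identically zero on any connected component of [a, b] ∖ {p_1, …, p_n}. Assume each p_i is a simple pole of φ: there is a nonzero real r_i with (x − p_i)·φ(x) → r_i as x → p_i. Assume φ(a) ≠ 0 and φ(b) ≠ 0, let n₊ (resp. n₋) be the number of i with r_i > 0 (resp. r_i < 0), and set c = 1 if φ(a)·φ(b) < 0 and c = 0 otherwise. Then the number N of zeros of φ in [a, b], counted with multiplicity (the order of vanishing of the analytic function φ at the zero), satisfies N ≥ |n₊ − n₋| − c, and N − (|n₊ − n₋| − c) is an even number. -/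

import Mathlib

open Filter Topology



private noncomputable def sg (x : ℝ) : ℤ := if 0 < x then 1 else -1

private lemma sg_cases (x : ℝ) : sg x = 1 ∨ sg x = -1 := by
  unfold sg; split <;> simp

private lemma sg_mul_pos {x y : ℝ} (hx : x ≠ 0) (hy : y ≠ 0) :
    0 < x * y ↔ sg x = sg y := by
  rcases hx.lt_or_gt with hx' | hx' <;> rcases hy.lt_or_gt with hy' | hy'
  · simp [sg, hx'.not_gt, hy'.not_gt, mul_pos_of_neg_of_neg hx' hy']
  · simp only [sg, hx'.not_gt, hy', if_true, if_false]
    constructor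
    · intro h; nlinarith
    · intro h; exact absurd h (by norm_num)
  · simp only [sg, hx', hy'.not_gt, if_true, if_false]
    constructor
    · intro h; nlinarith
    · intro h; exact absurd h (by norm_num)
  · simp [sg, hx', hy', mul_pos hx' hy']

private lemma sg_neg_of_mul_neg {x y : ℝ} (h : x * y < 0) : sg x = -sg y := by
  rcases lt_trichotomy x 0 with hx | hx | hx
  · have hy : 0 < y := by nlinarith
    simp [sg, hx.not_gt, hy]
  · rw [hx] at h; simp at h
  · have hy : y < 0 := by nlinarith
    simp [sg, hx, hy.not_gt]

private lemma no_zero_sign {φ : ℝ → ℝ} {u v : ℝ} (huv : u ≤ v)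
    (hc : ContinuousOn φ (Set.Icc u v)) (h : ∀ x ∈ Set.Icc u v, φ x ≠ 0) :
    0 < φ u * φ v := by
  rcases lt_trichotomy (φ u * φ v) 0 with hlt | heq | hgt
  · exfalso
    rcases mul_neg_iff.mp hlt with ⟨h1, h2⟩ | ⟨h1, h2⟩
    · obtain ⟨x, hx, hx0⟩ := intermediate_value_Icc' huv hc ⟨h2.le, h1.le⟩
      exact h x hx hx0
    · obtain ⟨x, hx, hx0⟩ := intermediate_value_Icc huv hc ⟨h1.le, h2.le⟩
      exact h x hx hx0
  · exact absurd heq (mul_ne_zero (h u ⟨le_refl u, huv⟩) (h v ⟨huv, le_refl v⟩))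
  · exact hgt
private lemma core (φ : ℝ → ℝ) (Z : Finset ℝ) (mult : ℝ → ℕ)
    (hZ0 : ∀ z ∈ Z, φ z = 0)
    (hfac : ∀ z ∈ Z, ∃ g : ℝ → ℝ, ContinuousAt g z ∧ g z ≠ 0 ∧
      ∀ᶠ y in 𝓝 z, φ y = (y - z) ^ (mult z) * g y) :
    ∀ (k : ℕ) (u v : ℝ), (Z.filter (fun z => z ∈ Set.Icc u v)).card = k → u < v →
      ContinuousOn φ (Set.Icc u v) →
      (∀ x ∈ Set.Icc u v, φ x = 0 → x ∈ Z) →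
      φ u ≠ 0 → φ v ≠ 0 →
      ((sg (φ u) = sg (φ v)) ↔ Even (∑ z ∈ Z.filter (fun z => z ∈ Set.Icc u v), mult z)) := by
  intro k
  induction k using Nat.strong_induction_on with
  | _ k IH =>
    intro u v hcard huv hcont hzin hu hv
    rcases Nat.eq_zero_or_pos k with rfl | hkpos
    · have hfe : Z.filter (fun z => z ∈ Set.Icc u v) = ∅ := Finset.card_eq_zero.mp hcard
      have hne : ∀ x ∈ Set.Icc u v, φ x ≠ 0 := by
        intro x hx h0
        have hxZ : x ∈ Z.filter (fun z => z ∈ Set.Icc u v) :=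
          Finset.mem_filter.mpr ⟨hzin x hx h0, hx⟩
        rw [hfe] at hxZ
        exact absurd hxZ (Finset.notMem_empty x)
      have hpos := no_zero_sign huv.le hcont hne
      rw [hfe]
      simp only [Finset.sum_empty]
      exact ⟨fun _ => Even.zero, fun _ => (sg_mul_pos hu hv).mp hpos⟩
    · set T := Z.filter (fun z => z ∈ Set.Icc u v) with hT
      have hTne : T.Nonempty := Finset.card_pos.mp (hcard ▸ hkpos)
      set z := T.min' hTne with hzdef
      have hzT : z ∈ T := T.min'_mem hTne
      have hzZ : z ∈ Z := (Finset.mem_filter.mp hzT).1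
      have hzI : z ∈ Set.Icc u v := (Finset.mem_filter.mp hzT).2
      have hz0 : φ z = 0 := hZ0 z hzZ
      have hzu : u < z := lt_of_le_of_ne hzI.1 (fun h => hu (h ▸ hz0))
      have hzv : z < v := lt_of_le_of_ne hzI.2 (fun h => hv (h ▸ hz0))
      obtain ⟨g, hgc, hgz, hev⟩ := hfac z hzZ
      set m := mult z with hm
      have hgpos : ∀ᶠ y in 𝓝 z, 0 < g y * g z := by
        have h1 : ContinuousAt (fun y => g y * g z) z := hgc.mul continuousAt_const
        exact h1.eventually (eventually_gt_nhds (mul_self_pos.mpr hgz))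
      obtain ⟨ε, hε, hball⟩ := Metric.eventually_nhds_iff.mp (hev.and hgpos)
      -- next zero bound
      obtain ⟨z', hzz', hz'v, hz'min⟩ :
          ∃ z', z < z' ∧ z' ≤ v ∧ ∀ t ∈ T.erase z, z' ≤ t := by
        by_cases hne : (T.erase z).Nonempty
        · refine ⟨(T.erase z).min' hne, ?_, ?_, fun t ht => (T.erase z).min'_le t ht⟩
          · have h1 := (T.erase z).min'_mem hne
            exact lt_of_le_of_ne (T.min'_le _ (Finset.mem_of_mem_erase h1))
              (Ne.symm (Finset.ne_of_mem_erase h1))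
          · exact (Finset.mem_filter.mp
              (Finset.mem_of_mem_erase ((T.erase z).min'_mem hne))).2.2
        · exact ⟨v, hzv, le_refl v, fun t ht => absurd ⟨t, ht⟩ hne⟩
      set w := min (z + ε/2) ((z + z')/2) with hwdef
      set y := max (z - ε/2) ((u + z)/2) with hydef
      have hzw : z < w := lt_min (by linarith) (by linarith)
      have hwz' : w < z' := min_lt_of_right_lt (by linarith)
      have hwv : w < v := lt_of_lt_of_le hwz' hz'v
      have hwball : dist w z < ε := by
        rw [Real.dist_eq, abs_of_pos (by linarith : (0:ℝ) < w - z)]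
        have : w ≤ z + ε/2 := min_le_left _ _
        linarith
      have hyz : y < z := max_lt (by linarith) (by linarith)
      have huy : u < y := lt_max_of_lt_right (by linarith)
      have hyball : dist y z < ε := by
        rw [Real.dist_eq, abs_of_neg (by linarith : y - z < 0)]
        have : z - ε/2 ≤ y := le_max_left _ _
        linarith
      obtain ⟨hφw, hgw⟩ := hball hwball
      obtain ⟨hφy, hgy⟩ := hball hyball
      have hgw0 : g w ≠ 0 := fun h => by rw [h, zero_mul] at hgw; exact lt_irrefl 0 hgw
      have hgy0 : g y ≠ 0 := fun h => by rw [h, zero_mul] at hgy; exact lt_irrefl 0 hgy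
      have hφw0 : φ w ≠ 0 := by
        rw [hφw]
        exact mul_ne_zero (pow_ne_zero _ (sub_ne_zero.mpr (ne_of_gt hzw))) hgw0
      have hφy0 : φ y ≠ 0 := by
        rw [hφy]
        exact mul_ne_zero (pow_ne_zero _ (sub_ne_zero.mpr (ne_of_lt hyz))) hgy0
      -- sign from u to y
      have hA : 0 < φ u * φ y := by
        apply no_zero_sign huy.le (hcont.mono (Set.Icc_subset_Icc_right (by linarith)))
        intro x hx h0
        have hxI : x ∈ Set.Icc u v := ⟨hx.1, le_trans hx.2 (by linarith)⟩
        have hxT : x ∈ T := Finset.mem_filter.mpr ⟨hzin x hxI h0, hxI⟩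
        have := T.min'_le x hxT
        have := hx.2
        linarith
      -- sign from y to w
      have hgyw : 0 < g y * g w := by nlinarith [hgy, hgw, sq_nonneg (g z)]
      have hyneg : y - z < 0 := by linarith
      have hwpos : 0 < w - z := by linarith
      have hprod : φ y * φ w = ((y - z) * (w - z)) ^ m * (g y * g w) := by
        rw [hφy, hφw, mul_pow]; ring
      have hP : (y - z) * (w - z) < 0 := mul_neg_of_neg_of_pos hyneg hwpos
      have hBiff : 0 < φ y * φ w ↔ Even m := by
        rw [hprod]
        constructor
        · intro hpos
          by_contra hodd
          have h1 : ((y-z)*(w-z)) ^ m < 0 := Odd.pow_neg (Nat.not_even_iff_odd.mp hodd) hP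
          nlinarith
        · intro heven
          exact mul_pos (heven.pow_pos (ne_of_lt hP)) hgyw
      -- IH on [w, v]
      have hTw : Z.filter (fun x => x ∈ Set.Icc w v) = T.erase z := by
        ext x
        simp only [Finset.mem_filter, Finset.mem_erase, Set.mem_Icc, hT]
        constructor
        · rintro ⟨hxZ, hx1, hx2⟩
          refine ⟨by intro h; rw [h] at hx1; linarith, hxZ, by linarith, hx2⟩
        · rintro ⟨hxne, hxZ, hx1, hx2⟩
          refine ⟨hxZ, ?_, hx2⟩
          have : z' ≤ x := hz'min x (Finset.mem_erase.mpr ⟨hxne,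
            Finset.mem_filter.mpr ⟨hxZ, Set.mem_Icc.mpr ⟨hx1, hx2⟩⟩⟩)
          linarith
      have hcard' : (Z.filter (fun x => x ∈ Set.Icc w v)).card = k - 1 := by
        rw [hTw, Finset.card_erase_of_mem hzT, hcard]
      have hIH := IH (k-1) (by omega) w v hcard' hwv
        (hcont.mono (Set.Icc_subset_Icc_left (by linarith)))
        (fun x hx h0 => hzin x ⟨by have := hx.1; linarith, hx.2⟩ h0) hφw0 hv
      rw [hTw] at hIH
      have hsum : ∑ x ∈ T, mult x = m + ∑ x ∈ T.erase z, mult x :=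
        (Finset.add_sum_erase T mult hzT).symm
      rw [hsum, Nat.even_add]
      have e1 : sg (φ u) = sg (φ y) := (sg_mul_pos hu hφy0).mp hA
      have e2 : (sg (φ y) = sg (φ w)) ↔ Even m := (sg_mul_pos hφy0 hφw0).symm.trans hBiff
      rw [e1, ← e2, ← hIH]
      rcases sg_cases (φ y) with h1 | h1 <;> rcases sg_cases (φ w) with h2 | h2 <;>
        rcases sg_cases (φ v) with h3 | h3 <;> rw [h1, h2, h3] <;> decide
private def cost : ℤ → List ℤ → ℤ → ℤ
  | A, [], B => if A = B then 0 else 1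
  | A, s :: t, B => (if A = -s then 0 else 1) + cost s t B

private lemma cost_bound : ∀ (l : List ℤ) (A B : ℤ),
    (∀ x ∈ l, x = 1 ∨ x = -1) → (A = 1 ∨ A = -1) → (B = 1 ∨ B = -1) →
    (2 * l.sum + A - B ≤ 2 * cost A l B ∧
     -(2 * l.sum) - A + B ≤ 2 * cost A l B ∧
     (cost A l B + l.length + (if A = B then 0 else 1)) % 2 = 0) := by
  intro l
  induction l with
  | nil =>
    intro A B _ hA hB
    rcases hA with rfl | rfl <;> rcases hB with rfl | rfl <;> simp [cost]
  | cons s t IH =>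
    intro A B hl hA hB
    have hs : s = 1 ∨ s = -1 := hl s (by simp)
    have hIH := IH s B (fun x hx => hl x (by simp [hx])) hs hB
    obtain ⟨i1, i2, i3⟩ := hIH
    rcases hA with rfl | rfl <;> rcases hs with rfl | rfl <;>
      rcases hB with rfl | rfl <;>
      simp only [cost, List.sum_cons, List.length_cons] at i1 i2 i3 ⊢ <;>
      norm_num at i1 i2 i3 ⊢ <;> omega

private lemma sum_parity : ∀ (l : List ℤ), (∀ x ∈ l, x = 1 ∨ x = -1) →
    (l.sum + l.length) % 2 = 0 := by
  intro l
  induction l with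
  | nil => simp
  | cons s t IH =>
    intro h
    have hs := h s (by simp)
    have hIH := IH (fun x hx => h x (by simp [hx]))
    rcases hs with rfl | rfl <;> simp only [List.sum_cons, List.length_cons] <;>
      push_cast at hIH ⊢ <;> omega

private lemma list_sum_range_map (f : ℕ → ℤ) : ∀ n : ℕ,
    ((List.range n).map f).sum = ∑ k ∈ Finset.range n, f k := by
  intro n
  induction n with
  | zero => simp
  | succ n IH => simp [List.range_succ, Finset.sum_range_succ, IH]

private lemma cost_sum : ∀ (n : ℕ) (t : ℕ → ℤ) (A B : ℤ),
    cost A ((List.range n).map t) B =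
      ∑ k ∈ Finset.range (n+1),
        (if (if k = 0 then A else t (k-1)) = (if k < n then -(t k) else B) then 0 else 1) := by
  intro n
  induction n with
  | zero => intro t A B; simp [cost]
  | succ n IH =>
    intro t A B
    rw [List.range_succ_eq_map, List.map_cons, List.map_map]
    have hmm : (t ∘ Nat.succ) = fun k => t (k+1) := rfl
    rw [hmm]
    show (if A = -(t 0) then 0 else 1) + cost (t 0) ((List.range n).map fun k => t (k+1)) B = _
    rw [IH (fun k => t (k+1)) (t 0) B]
    rw [Finset.sum_range_succ' _ (n+1)]
    have h0 : (if (if (0:ℕ) = 0 then A else t (0-1)) = (if 0 < n+1 then -(t 0) else B)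
        then (0:ℤ) else 1) = (if A = -(t 0) then 0 else 1) := by
      simp [Nat.succ_pos]
    rw [h0, add_comm]
    congr 1
    apply Finset.sum_congr rfl
    intro k hk
    by_cases hk0 : k = 0
    · subst hk0; simp
    · have hk1 : k - 1 + 1 = k := by omega
      simp only [hk0, if_false, Nat.add_eq_zero, and_false, one_ne_zero]
      rw [hk1]
      simp

/-- Zero count (with multiplicities) for a real-analytic function on `[a,b]` with simple poles
`p_1 < ⋯ < p_n` in `(a,b)`: with `n₊` (resp. `n₋`) the number of poles with positive (resp.
negative) residue, and `c = 1` if `φ(a)φ(b) < 0` and `c = 0` otherwise, the number `N` of zeros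
of `φ` in `[a,b]` counted with multiplicity satisfies `N ≥ |n₊ - n₋| - c` and
`N - (|n₊ - n₋| - c)` is even. -/
theorem zeros_with_multiplicity_from_poles
    (a b : ℝ) (hab : a < b) (n : ℕ) (p : Fin n → ℝ) (hmono : StrictMono p)
    (hmem : ∀ i, p i ∈ Set.Ioo a b)
    (φ : ℝ → ℝ)
    (han : AnalyticOnNhd ℝ φ (Set.Icc a b \ Set.range p))
    (hnz : ∀ x ∈ Set.Icc a b \ Set.range p,
      ¬ ∀ y ∈ connectedComponentIn (Set.Icc a b \ Set.range p) x, φ y = 0)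
    (r : Fin n → ℝ) (hr : ∀ i, r i ≠ 0)
    (hres : ∀ i, Filter.Tendsto (fun x => (x - p i) * φ x) (𝓝[≠] (p i)) (𝓝 (r i)))
    (ha : φ a ≠ 0) (hb : φ b ≠ 0)
    (Z : Finset ℝ)
    (hZ : (↑Z : Set ℝ) = {x ∈ Set.Icc a b \ Set.range p | φ x = 0})
    (mult : ℝ → ℕ)
    (hmult : ∀ x ∈ Z, ∃ g : ℝ → ℝ, AnalyticAt ℝ g x ∧ g x ≠ 0 ∧
      ∀ᶠ y in 𝓝 x, φ y = (y - x) ^ (mult x) * g y)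
    (N : ℕ) (hN : N = ∑ x ∈ Z, mult x)
    (c : ℤ) (hc : c = if φ a * φ b < 0 then 1 else 0) :
    ((((Finset.univ.filter fun i => 0 < r i).card : ℤ)
        - ((Finset.univ.filter fun i => r i < 0).card : ℤ)).natAbs - c : ℤ) ≤ N ∧
    Even ((N : ℤ) -
      (((((Finset.univ.filter fun i => 0 < r i).card : ℤ)
        - ((Finset.univ.filter fun i => r i < 0).card : ℤ)).natAbs : ℤ) - c)) := by
  classical
  have hZmem : ∀ z ∈ Z, z ∈ Set.Icc a b \ Set.range p := by
    intro z hz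
    have h1 : z ∈ (↑Z : Set ℝ) := Finset.mem_coe.mpr hz
    rw [hZ] at h1
    exact h1.1
  have hZ0 : ∀ z ∈ Z, φ z = 0 := by
    intro z hz
    have h1 : z ∈ (↑Z : Set ℝ) := Finset.mem_coe.mpr hz
    rw [hZ] at h1
    exact h1.2
  have hZin : ∀ x ∈ Set.Icc a b \ Set.range p, φ x = 0 → x ∈ Z := by
    intro x hx h0
    have : x ∈ (↑Z : Set ℝ) := by rw [hZ]; exact ⟨hx, h0⟩
    exact Finset.mem_coe.mp this
  have hfac' : ∀ z ∈ Z, ∃ g : ℝ → ℝ, ContinuousAt g z ∧ g z ≠ 0 ∧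
      ∀ᶠ y in 𝓝 z, φ y = (y - z) ^ (mult z) * g y := by
    intro z hz
    obtain ⟨g, h1, h2, h3⟩ := hmult z hz
    exact ⟨g, h1.continuousAt, h2, h3⟩
  rcases Nat.eq_zero_or_pos n with rfl | hn
  · -- case n = 0 : no poles
    have hrange : Set.range p = ∅ := by simp
    have hZf : Z.filter (fun z => z ∈ Set.Icc a b) = Z :=
      Finset.filter_true_of_mem (fun z hz => ((hZmem z hz).1))
    have hcont : ContinuousOn φ (Set.Icc a b) := by
      intro x hx
      exact (han x (by rw [hrange, Set.diff_empty]; exact hx)).continuousAt.continuousWithinAt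
    have hcore := core φ Z mult hZ0 hfac' (Z.filter (fun z => z ∈ Set.Icc a b)).card a b rfl hab
      hcont (fun x hx h0 => hZin x (by rw [hrange, Set.diff_empty]; exact hx) h0) ha hb
    rw [hZf, ← hN] at hcore
    have hNpar : ((N:ℤ) % 2 = 0) ↔ (sg (φ a) = sg (φ b)) := by
      rw [← Int.even_iff, Int.even_coe_nat]; exact hcore.symm
    simp only [Finset.univ_eq_empty, Finset.filter_empty, Finset.card_empty]
    rcases lt_trichotomy (φ a * φ b) 0 with hlt | heq | hgt
    · have hc1 : c = 1 := by rw [hc, if_pos hlt]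
      have hodd : ¬((N:ℤ) % 2 = 0) := by
        intro h
        have := (sg_mul_pos ha hb).mpr (hNpar.mp h)
        linarith
      constructor
      · omega
      · rw [Int.even_iff]; omega
    · exact absurd heq (mul_ne_zero ha hb)
    · have hc0 : c = 0 := by rw [hc, if_neg (not_lt.mpr hgt.le)]
      have heven : (N:ℤ) % 2 = 0 := hNpar.mpr ((sg_mul_pos ha hb).mp hgt)
      constructor
      · omega
      · rw [Int.even_iff]; omega
  · -- case n ≥ 1
    have Hδ : ∀ i : Fin n, ∃ δ > 0, ∀ x, x ≠ p i → |x - p i| < δ →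
        0 < (x - p i) * φ x * r i := by
      intro i
      have h1 : Tendsto (fun x => ((x - p i) * φ x) * r i) (𝓝[≠] p i) (𝓝 (r i * r i)) :=
        (hres i).mul_const (r i)
      have h2 : ∀ᶠ x in 𝓝[≠] p i, 0 < ((x - p i) * φ x) * r i :=
        h1.eventually (eventually_gt_nhds (mul_self_pos.mpr (hr i)))
      rw [eventually_nhdsWithin_iff, Metric.eventually_nhds_iff] at h2
      obtain ⟨δ, hδ0, h3⟩ := h2
      refine ⟨δ, hδ0, fun x hx hd => ?_⟩
      exact h3 (by rw [Real.dist_eq]; exact hd) (by simpa using hx)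
    choose δ hδpos hδ using Hδ
    set Gp : Fin n → ℝ :=
      fun i => if h : (i : ℕ) + 1 < n then (p ⟨(i:ℕ)+1, h⟩ - p i)/3 else 1 with hGp
    set F : Fin n → ℝ :=
      fun i => min (δ i / 2) (min ((p i - a)/3) (min ((b - p i)/3) (Gp i))) with hF
    have hFpos : ∀ i, 0 < F i := by
      intro i
      have h1 : 0 < δ i / 2 := by linarith [hδpos i]
      have h2 : 0 < (p i - a)/3 := by have := (hmem i).1; linarith
      have h3 : 0 < (b - p i)/3 := by have := (hmem i).2; linarith
      have h4 : 0 < Gp i := by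
        rw [hGp]; dsimp only; split
        · rename_i hlt
          have : p i < p ⟨(i:ℕ)+1, hlt⟩ := hmono (by simp [Fin.lt_def])
          linarith
        · norm_num
      exact lt_min h1 (lt_min h2 (lt_min h3 h4))
    have hnonempty : Nonempty (Fin n) := ⟨⟨0, hn⟩⟩
    have hFne : (Finset.univ.image F).Nonempty := Finset.univ_nonempty.image F
    set ε := (Finset.univ.image F).min' hFne with hεdef
    have hεle : ∀ i, ε ≤ F i := fun i =>
      Finset.min'_le _ _ (Finset.mem_image_of_mem F (Finset.mem_univ i))
    have hεpos : 0 < ε := by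
      obtain ⟨i, -, hi⟩ := Finset.mem_image.mp ((Finset.univ.image F).min'_mem hFne)
      exact lt_of_lt_of_eq (hFpos i) hi
    have hεδ : ∀ i, 2 * ε ≤ δ i := by
      intro i; have := le_trans (hεle i) (min_le_left _ _); linarith
    have hεa : ∀ i, 3 * ε ≤ p i - a := by
      intro i
      have := le_trans (hεle i) (le_trans (min_le_right _ _) (min_le_left _ _)); linarith
    have hεb : ∀ i, 3 * ε ≤ b - p i := by
      intro i
      have := le_trans (hεle i) (le_trans (min_le_right _ _)
        (le_trans (min_le_right _ _) (min_le_left _ _))); linarith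
    have hεG : ∀ i, ε ≤ Gp i := fun i => le_trans (hεle i) (le_trans (min_le_right _ _)
        (le_trans (min_le_right _ _) (min_le_right _ _)))
    have hεgap : ∀ i j : Fin n, i < j → 3 * ε ≤ p j - p i := by
      intro i j hij
      have hij' : (i:ℕ) + 1 ≤ (j:ℕ) := hij
      have h1 : (i:ℕ) + 1 < n := lt_of_le_of_lt hij' j.isLt
      have h2 := hεG i
      rw [hGp] at h2; dsimp only at h2; rw [dif_pos h1] at h2
      have h3 : p ⟨(i:ℕ)+1, h1⟩ ≤ p j := hmono.monotone (by simpa [Fin.le_def] using hij')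
      linarith
    set L : ℕ → ℝ := fun k => if h : 0 < k ∧ k ≤ n then p ⟨k-1, by omega⟩ + ε else a with hLdef
    set R : ℕ → ℝ := fun k => if h : k < n then p ⟨k, h⟩ - ε else b with hRdef
    have hL0 : L 0 = a := by rw [hLdef]; simp
    have hRn : R n = b := by rw [hRdef]; simp
    have hLs : ∀ (k:ℕ) (h : k < n), L (k+1) = p ⟨k, h⟩ + ε := by
      intro k h
      rw [hLdef]; dsimp only
      rw [dif_pos (by omega : 0 < k+1 ∧ k+1 ≤ n)]
      rfl
    have hRk : ∀ (k:ℕ) (h : k < n), R k = p ⟨k, h⟩ - ε := by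
      intro k h; rw [hRdef]; dsimp only; rw [dif_pos h]
    have hsignR : ∀ (k:ℕ) (h : k < n), φ (R k) * r ⟨k,h⟩ < 0 := by
      intro k h
      have hne : R k ≠ p ⟨k,h⟩ := by
        rw [hRk k h]; intro he; linarith [hεpos, he.le, he.ge]
      have hdist : |R k - p ⟨k,h⟩| < δ ⟨k,h⟩ := by
        rw [hRk k h]
        have he : p ⟨k,h⟩ - ε - p ⟨k,h⟩ = -ε := by ring
        rw [he, abs_neg, abs_of_pos hεpos]
        linarith [hεδ ⟨k,h⟩, hδpos ⟨k,h⟩]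
      have h1 := hδ ⟨k,h⟩ (R k) hne hdist
      rw [hRk k h] at h1 ⊢
      have he : p ⟨k,h⟩ - ε - p ⟨k,h⟩ = -ε := by ring
      rw [he] at h1
      nlinarith [hεpos]
    have hsignL : ∀ (k:ℕ) (h : k < n), 0 < φ (L (k+1)) * r ⟨k,h⟩ := by
      intro k h
      have hne : L (k+1) ≠ p ⟨k,h⟩ := by
        rw [hLs k h]; intro he; linarith [hεpos, he.le, he.ge]
      have hdist : |L (k+1) - p ⟨k,h⟩| < δ ⟨k,h⟩ := by
        rw [hLs k h]
        have he : p ⟨k,h⟩ + ε - p ⟨k,h⟩ = ε := by ring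
        rw [he, abs_of_pos hεpos]
        linarith [hεδ ⟨k,h⟩, hδpos ⟨k,h⟩]
      have h1 := hδ ⟨k,h⟩ (L (k+1)) hne hdist
      rw [hLs k h] at h1 ⊢
      have he : p ⟨k,h⟩ + ε - p ⟨k,h⟩ = ε := by ring
      rw [he] at h1
      nlinarith [hεpos]
    have hLne : ∀ k, k ≤ n → φ (L k) ≠ 0 := by
      intro k hk
      rcases Nat.eq_zero_or_pos k with rfl | hk0
      · rw [hL0]; exact ha
      · obtain ⟨k', rfl⟩ : ∃ k', k = k'+1 := ⟨k-1, by omega⟩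
        have h' : k' < n := by omega
        intro h0
        have := hsignL k' h'
        rw [h0] at this; simp at this
    have hRne : ∀ k, k ≤ n → φ (R k) ≠ 0 := by
      intro k hk
      rcases Nat.lt_or_ge k n with h' | h'
      · intro h0; have := hsignR k h'; rw [h0] at this; simp at this
      · have hkn : k = n := by omega
        rw [hkn, hRn]; exact hb
    have hLR : ∀ k, k ≤ n → L k < R k := by
      intro k hk
      rcases Nat.eq_zero_or_pos k with rfl | hk0
      · rw [hL0, hRk 0 hn]
        have := hεa ⟨0,hn⟩; linarith [hεpos]
      · obtain ⟨k', rfl⟩ : ∃ k', k = k'+1 := ⟨k-1, by omega⟩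
        have h1 : k' < n := by omega
        rw [hLs k' h1]
        rcases Nat.lt_or_ge (k'+1) n with h2 | h2
        · rw [hRk (k'+1) h2]
          have := hεgap ⟨k',h1⟩ ⟨k'+1,h2⟩ (by simp [Fin.lt_def])
          linarith
        · have hkn : k'+1 = n := by omega
          rw [hkn, hRn]
          have := hεb ⟨k',h1⟩; linarith [hεpos]
    have hsub : ∀ k, k ≤ n → Set.Icc (L k) (R k) ⊆ Set.Icc a b \ Set.range p := by
      intro k hk x hx
      have hxa : a ≤ x := by
        rcases Nat.eq_zero_or_pos k with rfl | hk0
        · rw [hL0] at hx; exact hx.1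
        · obtain ⟨k', rfl⟩ : ∃ k', k = k'+1 := ⟨k-1, by omega⟩
          have h1 : k' < n := by omega
          rw [hLs k' h1] at hx
          have h2 := hεa ⟨k',h1⟩
          have h3 := hx.1
          linarith [hεpos]
      have hxb : x ≤ b := by
        rcases Nat.lt_or_ge k n with h' | h'
        · rw [hRk k h'] at hx
          have h2 := hεb ⟨k,h'⟩; have h3 := hx.2; linarith [hεpos]
        · have hkn : k = n := by omega
          rw [hkn, hRn] at hx; exact hx.2
      refine ⟨⟨hxa, hxb⟩, ?_⟩
      rintro ⟨i, rfl⟩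
      rcases Nat.lt_or_ge (i:ℕ) k with hik | hik
      · obtain ⟨k', rfl⟩ : ∃ k', k = k'+1 := ⟨k-1, by omega⟩
        have h1 : k' < n := by omega
        rw [hLs k' h1] at hx
        have hle : p i ≤ p ⟨k',h1⟩ := hmono.monotone (by simp [Fin.le_def]; omega)
        have h3 := hx.1
        linarith [hεpos]
      · have h' : k < n := lt_of_le_of_lt hik i.isLt
        rw [hRk k h'] at hx
        have hle : p ⟨k,h'⟩ ≤ p i := hmono.monotone (by simp [Fin.le_def]; omega)
        have h3 := hx.2
        linarith [hεpos]
    have hzfar : ∀ z ∈ Z, ∀ i, 2*ε ≤ |z - p i| := by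
      intro z hz i
      by_contra hlt
      push_neg at hlt
      have hne : z ≠ p i := by
        intro h; exact (hZmem z hz).2 ⟨i, h.symm⟩
      have h1 := hδ i z hne (lt_of_lt_of_le hlt (hεδ i))
      rw [hZ0 z hz] at h1
      simp at h1
    have hmemS : ∀ z ∈ Z, ∀ i : Fin n,
        ((i:ℕ) < (Finset.univ.filter (fun j : Fin n => p j < z)).card ↔ p i < z) := by
      intro z hz i
      constructor
      · intro hi
        by_contra hmemi
        have hsub2 : Finset.univ.filter (fun j : Fin n => p j < z) ⊆ Finset.Iio i := by
          intro j hj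
          rw [Finset.mem_Iio]
          by_contra hji
          push_neg at hji
          have hpj : p j < z := (Finset.mem_filter.mp hj).2
          exact hmemi (lt_of_le_of_lt (hmono.monotone hji) hpj)
        have hcard := Finset.card_le_card hsub2
        rw [Fin.card_Iio] at hcard
        omega
      · intro hpi
        have hsub2 : Finset.Iic i ⊆ Finset.univ.filter (fun j : Fin n => p j < z) := by
          intro j hj
          rw [Finset.mem_Iic] at hj
          exact Finset.mem_filter.mpr ⟨Finset.mem_univ j,
            lt_of_le_of_lt (hmono.monotone hj) hpi⟩
        have hcard := Finset.card_le_card hsub2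
        rw [Fin.card_Iic] at hcard
        omega
    have hpart : ∀ z ∈ Z, ∃ k, k ≤ n ∧ z ∈ Set.Icc (L k) (R k) := by
      intro z hz
      have hiff := hmemS z hz
      set k := (Finset.univ.filter (fun j : Fin n => p j < z)).card with hkdef
      have hkn : k ≤ n := le_trans (Finset.card_filter_le _ _) (by simp)
      refine ⟨k, hkn, ?_, ?_⟩
      · rcases Nat.eq_zero_or_pos k with h0 | h0
        · rw [h0, hL0]; exact ((hZmem z hz).1).1
        · obtain ⟨k', hks⟩ : ∃ k', k = k'+1 := ⟨k - 1, by omega⟩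
          have h1 : k' < n := by omega
          rw [hks, hLs k' h1]
          have hpi : p ⟨k',h1⟩ < z := (hiff ⟨k',h1⟩).mp (by simp; omega)
          have hfar := hzfar z hz ⟨k',h1⟩
          rw [abs_of_pos (by linarith)] at hfar
          linarith
      · rcases Nat.lt_or_ge k n with h' | h'
        · rw [hRk k h']
          have hni : ¬ p ⟨k, h'⟩ < z := by
            intro hcon
            have h2 := (hiff ⟨k,h'⟩).mpr hcon
            simp at h2
          have hne : z ≠ p ⟨k,h'⟩ := fun h => (hZmem z hz).2 ⟨_, h.symm⟩
          have hlt : z < p ⟨k,h'⟩ := lt_of_le_of_ne (not_lt.mp hni) hne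
          have hfar := hzfar z hz ⟨k,h'⟩
          rw [abs_of_neg (by linarith)] at hfar
          linarith
        · have hkn2 : k = n := by omega
          rw [hkn2, hRn]; exact ((hZmem z hz).1).2
    set Zk : ℕ → Finset ℝ := fun k => Z.filter (fun z => z ∈ Set.Icc (L k) (R k)) with hZkdef
    have hRL : ∀ k k', k < k' → k' ≤ n → R k < L k' := by
      intro k k' h1 h2
      have hk : k < n := by omega
      rw [hRk k hk]
      obtain ⟨k'', rfl⟩ : ∃ m, k' = m + 1 := ⟨k'-1, by omega⟩
      rw [hLs k'' (by omega)]
      have : p ⟨k,hk⟩ ≤ p ⟨k'', by omega⟩ := hmono.monotone (by simp [Fin.le_def]; omega)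
      linarith [hεpos]
    have hdisj : ∀ k ∈ Finset.range (n+1), ∀ k' ∈ Finset.range (n+1),
        k ≠ k' → Disjoint (Zk k) (Zk k') := by
      have key : ∀ k k', k < k' → k' ≤ n → Disjoint (Zk k) (Zk k') := by
        intro k k' h1 h2
        rw [Finset.disjoint_left]
        intro x hx hx'
        have e1 : x ≤ R k := (Finset.mem_filter.mp hx).2.2
        have e2 : L k' ≤ x := (Finset.mem_filter.mp hx').2.1
        have := hRL k k' h1 h2
        linarith
      intro k hk k' hk' hne
      rcases lt_or_gt_of_ne hne with h | h
      · exact key k k' h (by simpa using Nat.lt_succ_iff.mp (Finset.mem_range.mp hk'))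
      · exact (key k' k h (by simpa using Nat.lt_succ_iff.mp (Finset.mem_range.mp hk))).symm
    have hunion : Z = (Finset.range (n+1)).biUnion Zk := by
      apply Finset.ext
      intro z
      constructor
      · intro hz
        obtain ⟨k, hk, hmem2⟩ := hpart z hz
        exact Finset.mem_biUnion.mpr ⟨k, Finset.mem_range.mpr (by omega),
          Finset.mem_filter.mpr ⟨hz, hmem2⟩⟩
      · intro hz
        obtain ⟨k, _, hzk⟩ := Finset.mem_biUnion.mp hz
        exact (Finset.mem_filter.mp hzk).1
    have hNsum : N = ∑ k ∈ Finset.range (n+1), ∑ z ∈ Zk k, mult z := by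
      rw [hN, hunion]
      exact Finset.sum_biUnion (fun k hk k' hk' hne =>
        hdisj k (Finset.mem_coe.mp hk) k' (Finset.mem_coe.mp hk') hne)
    have hcorek : ∀ k, k ≤ n →
        ((sg (φ (L k)) = sg (φ (R k))) ↔ Even (∑ z ∈ Zk k, mult z)) := by
      intro k hk
      exact core φ Z mult hZ0 hfac' (Zk k).card (L k) (R k) rfl (hLR k hk)
        (fun x hx => (han x (hsub k hk hx)).continuousAt.continuousWithinAt)
        (fun x hx h0 => hZin x (hsub k hk hx) h0)
        (hLne k hk) (hRne k hk)
    -- sign sequence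
    set A := sg (φ a) with hA
    set B := sg (φ b) with hB
    set t : ℕ → ℤ := fun k => if h : k < n then sg (r ⟨k,h⟩) else 1 with ht
    have hLsg : ∀ k, k ≤ n → sg (φ (L k)) = (if k = 0 then A else t (k-1)) := by
      intro k hk
      rcases Nat.eq_zero_or_pos k with rfl | hk0
      · rw [hL0]; simp [hA]
      · obtain ⟨k', rfl⟩ : ∃ k', k = k'+1 := ⟨k-1, by omega⟩
        have h' : k' < n := by omega
        have h1 := (sg_mul_pos (hLne (k'+1) hk) (hr ⟨k',h'⟩)).mp (hsignL k' h')
        rw [h1, ht]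
        simp [dif_pos h']
    have hRsg : ∀ k, k ≤ n → sg (φ (R k)) = (if k < n then -(t k) else B) := by
      intro k hk
      rcases Nat.lt_or_ge k n with h' | h'
      · have h1 := sg_neg_of_mul_neg (hsignR k h')
        rw [h1, if_pos h', ht]
        simp [dif_pos h']
      · have hkn : k = n := by omega
        rw [hkn, hRn, if_neg (lt_irrefl n)]
    set e : ℕ → ℤ := fun k => if sg (φ (L k)) = sg (φ (R k)) then 0 else 1 with he
    have hcost : cost A ((List.range n).map t) B = ∑ k ∈ Finset.range (n+1), e k := by
      rw [cost_sum n t A B]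
      apply Finset.sum_congr rfl
      intro k hk
      have hk' : k ≤ n := by
        have := Finset.mem_range.mp hk; omega
      rw [he]; dsimp only
      rw [hLsg k hk', hRsg k hk']
    have hek : ∀ k ∈ Finset.range (n+1),
        e k ≤ ((∑ z ∈ Zk k, mult z : ℕ) : ℤ) ∧
          (((∑ z ∈ Zk k, mult z : ℕ) : ℤ) + e k) % 2 = 0 := by
      intro k hk
      have hk' : k ≤ n := by
        have := Finset.mem_range.mp hk; omega
      have hcore2 := hcorek k hk'
      rw [he]; dsimp only
      by_cases hsg : sg (φ (L k)) = sg (φ (R k))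
      · rw [if_pos hsg]
        have heven : (∑ z ∈ Zk k, mult z) % 2 = 0 := Nat.even_iff.mp (hcore2.mp hsg)
        constructor
        · positivity
        · omega
      · rw [if_neg hsg]
        have hodd : (∑ z ∈ Zk k, mult z) % 2 = 1 :=
          Nat.not_even_iff.mp (fun h => hsg (hcore2.mpr h))
        constructor
        · omega
        · omega
    have hEsum : ∑ k ∈ Finset.range (n+1), e k ≤ (N:ℤ) := by
      have h1 : ∑ k ∈ Finset.range (n+1), e k ≤
          ∑ k ∈ Finset.range (n+1), ((∑ z ∈ Zk k, mult z : ℕ) : ℤ) :=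
        Finset.sum_le_sum (fun k hk => (hek k hk).1)
      have h2 : ((N:ℤ)) = ∑ k ∈ Finset.range (n+1), ((∑ z ∈ Zk k, mult z : ℕ) : ℤ) := by
        rw [hNsum]; push_cast; rfl
      rw [h2]
      exact h1
    have hpar2 : ((N:ℤ) + ∑ k ∈ Finset.range (n+1), e k) % 2 = 0 := by
      have h1 : Even (∑ k ∈ Finset.range (n+1), (((∑ z ∈ Zk k, mult z : ℕ) : ℤ) + e k)) :=
        Finset.sum_induction _ Even (fun x y hx hy => hx.add hy) Even.zero
          (fun k hk => Int.even_iff.mpr (hek k hk).2)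
      rw [Finset.sum_add_distrib] at h1
      have h2 := Int.even_iff.mp h1
      have h3 : ((N:ℤ)) = ∑ k ∈ Finset.range (n+1), ((∑ z ∈ Zk k, mult z : ℕ) : ℤ) := by
        rw [hNsum]; push_cast; rfl
      omega
    have hlmem : ∀ x ∈ (List.range n).map t, x = 1 ∨ x = -1 := by
      intro x hx
      obtain ⟨k, hk, rfl⟩ := List.mem_map.mp hx
      have hk' := List.mem_range.mp hk
      rw [ht]; dsimp only; rw [dif_pos hk']
      exact sg_cases _
    obtain ⟨i1, i2, i3⟩ := cost_bound ((List.range n).map t) A B hlmem (sg_cases _) (sg_cases _)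
    have hpar4 := sum_parity ((List.range n).map t) hlmem
    have hlen : (((List.range n).map t).length : ℤ) = (n:ℤ) := by simp
    have hlsum : ((List.range n).map t).sum = ∑ i : Fin n, sg (r i) := by
      rw [list_sum_range_map, ← Fin.sum_univ_eq_sum_range t n]
      apply Finset.sum_congr rfl
      intro i _
      rw [ht]; dsimp only; rw [dif_pos i.isLt]
    have hpm : ∑ i : Fin n, sg (r i) =
        ((Finset.univ.filter fun i => 0 < r i).card : ℤ)
          - ((Finset.univ.filter fun i => r i < 0).card : ℤ) := by
      rw [← Finset.sum_boole, ← Finset.sum_boole, ← Finset.sum_sub_distrib]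
      apply Finset.sum_congr rfl
      intro i _
      rcases (hr i).lt_or_gt with h | h
      · simp [sg, asymm h, h]
      · simp [sg, asymm h, h]
    have hcAB : (A = B ∧ c = 0) ∨ (A ≠ B ∧ c = 1) := by
      rcases lt_trichotomy (φ a * φ b) 0 with hlt | heq | hgt
      · right
        refine ⟨?_, by rw [hc, if_pos hlt]⟩
        have h1 := sg_neg_of_mul_neg hlt
        rcases sg_cases (φ b) with h | h <;> rw [hA, hB, h1, h] <;> decide
      · exact absurd heq (mul_ne_zero ha hb)
      · left
        exact ⟨(sg_mul_pos ha hb).mp hgt, by rw [hc, if_neg (not_lt.mpr hgt.le)]⟩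
    have hSeq : ((List.range n).map t).sum =
        ((Finset.univ.filter fun i => 0 < r i).card : ℤ)
          - ((Finset.univ.filter fun i => r i < 0).card : ℤ) := hlsum.trans hpm
    have habs := Int.natAbs_eq (((Finset.univ.filter fun i => 0 < r i).card : ℤ)
          - ((Finset.univ.filter fun i => r i < 0).card : ℤ))
    have hAv := sg_cases (φ a)
    have hBv := sg_cases (φ b)
    rw [← hA] at hAv
    rw [← hB] at hBv
    constructor
    · rcases hcAB with ⟨h1, h2⟩ | ⟨h1, h2⟩ <;> rcases habs with h3 | h3 <;>
        rcases hAv with h4 | h4 <;> rcases hBv with h5 | h5 <;>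
        rcases i3 with - <;>
        omega
    · rw [Int.even_iff]
      rcases hcAB with ⟨h1, h2⟩ | ⟨h1, h2⟩
      · rw [if_pos h1] at i3
        rcases habs with h3 | h3 <;> omega
      · rw [if_neg h1] at i3
        rcases habs with h3 | h3 <;> omega
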